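/- arXiv:1407.5761 — 7 statements merged into one kernel-verified Lean document; each statement's English description precedes it below -/
import Mathlib

section
/- Let X be a compact Hausdorff totally disconnected space and f : X → {0,1} a function such that f can be written as the limit along the filter 𝔉 of a family of continuous functions (f_i) indexed by finite subsets of a cardinal κ (where 𝔉 is the filter generated by the sets {i : i ⊇ j} for finite j ⊆ κ). Then f⁻¹(1) can be written both as a union of at most κ closed sets and as an intersection of at most κ open sets. -/
open Filter Topology

/-- If `f : X → Bool` on a compact Hausdorff totally disconnected space is the
pointwise limit, along the filter `atTop` on finite subsets of `κ` (the filter generated by the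
sets `{i : i ⊇ j}`), of a family of continuous functions, then `f ⁻¹' {true}` is both a union of
at most `κ` closed sets and an intersection of at most `κ` open sets. -/
theorem stmt0 {X : Type*} [TopologicalSpace X] [CompactSpace X] [T2Space X]
    [TotallyDisconnectedSpace X] {κ : Type*} [Infinite κ]
    (f : X → Bool) (g : Finset κ → X → Bool)
    (hcont : ∀ i, Continuous (g i))
    (hlim : ∀ x : X, Tendsto (fun i => g i x) atTop (nhds (f x))) :
    (∃ F : κ → Set X, (∀ i, IsClosed (F i)) ∧ f ⁻¹' {true} = ⋃ i, F i) ∧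
    (∃ G : κ → Set X, (∀ i, IsOpen (G i)) ∧ f ⁻¹' {true} = ⋂ i, G i) := by
  obtain ⟨e⟩ : Nonempty (κ ≃ Finset κ) :=
    Cardinal.eq.1 (Cardinal.mk_finset_of_infinite κ).symm
  have hev : ∀ x : X, ∀ᶠ i in atTop, g i x = f x := by
    intro x
    have := hlim x
    rwa [nhds_discrete, tendsto_pure] at this
  have key : ∀ (x : X) (b : Bool), f x = b ↔ ∃ j : Finset κ, ∀ i, j ≤ i → g i x = b := by
    intro x b
    constructor
    · rintro rfl
      exact eventually_atTop.1 (hev x)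
    · rintro ⟨j, hj⟩
      obtain ⟨i, h1, h2⟩ := ((eventually_atTop.2 ⟨j, hj⟩).and (hev x)).exists
      rw [← h2, h1]
  constructor
  · refine ⟨fun k => ⋂ i ∈ {i | e k ≤ i}, (g i) ⁻¹' {true}, fun k => ?_, ?_⟩
    · exact isClosed_biInter fun i _ => (isClosed_singleton).preimage (hcont i)
    · ext x
      simp only [Set.mem_preimage, Set.mem_singleton_iff, Set.mem_iUnion, Set.mem_iInter,
        Set.mem_setOf_eq]
      rw [key x true]
      constructor
      · rintro ⟨j, hj⟩; exact ⟨e.symm j, fun i hi => hj i (by simpa using hi)⟩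
      · rintro ⟨k, hk⟩; exact ⟨e k, hk⟩
  · refine ⟨fun k => (⋂ i ∈ {i | e k ≤ i}, (g i) ⁻¹' {false})ᶜ, fun k => ?_, ?_⟩
    · exact (isClosed_biInter fun i _ => (isClosed_singleton).preimage (hcont i)).isOpen_compl
    · ext x
      simp only [Set.mem_preimage, Set.mem_singleton_iff, Set.mem_iInter, Set.mem_compl_iff,
        Set.mem_setOf_eq, not_forall]
      constructor
      · intro hx k
        by_contra hall
        push_neg at hall
        have : f x = false := (key x false).2 ⟨e k, fun i hi => hall i hi⟩
        rw [hx] at this; exact Bool.noConfusion this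
      · intro h
        by_contra hxf
        have hfx : f x = false := by
          cases hfx : f x
          · rfl
          · exact absurd hfx hxf
        obtain ⟨j, hj⟩ := (key x false).1 hfx
        obtain ⟨i, hi, hgi⟩ := h (e.symm j)
        simp only [Equiv.apply_symm_apply] at hi
        exact hgi (hj i (by simpa using hi))
end

section
/- Let X be a compact Hausdorff totally disconnected space with a base of size at most κ, and f : X → {0,1}. If f⁻¹(1) can be written both as a union of at most κ closed sets and as an intersection of at most κ open sets, then f is the limit along the filter 𝔉_κ of a family of continuous {0,1}-valued (indicator of clopen set) functions indexed by 𝔓_{<ω}(κ). -/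
open Filter Topology

lemma exists_isClopen_between {X : Type*} [TopologicalSpace X] [CompactSpace X] [T2Space X]
    [TotallyDisconnectedSpace X] {C U : Set X} (hC : IsClosed C) (hU : IsOpen U) (hCU : C ⊆ U) :
    ∃ K, IsClopen K ∧ C ⊆ K ∧ K ⊆ U := by
  choose K hK hxK hKU using fun x : C => compact_exists_isClopen_in_isOpen hU (hCU x.2)
  obtain ⟨t, ht⟩ := hC.isCompact.elim_finite_subcover K (fun x => (hK x).2)
    (fun x hx => Set.mem_iUnion.2 ⟨⟨x, hx⟩, hxK ⟨x, hx⟩⟩)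
  refine ⟨⋃ x ∈ t, K x, isClopen_biUnion_finset (fun x _ => hK x), ht, ?_⟩
  exact Set.iUnion₂_subset fun x _ => hKU x

/-- If `X` is compact Hausdorff totally disconnected with a base of size at most `κ`
and `f ⁻¹' {true}` is both a union of at most `κ` closed sets and an intersection of at most `κ`
open sets, then `f` is the limit along the filter `𝔉_κ` (i.e. `atTop` on finite subsets of `κ`)
of a family of continuous `Bool`-valued functions (indicators of clopen sets). -/
theorem stmt1 {X : Type*} [TopologicalSpace X] [CompactSpace X] [T2Space X]
    [TotallyDisconnectedSpace X] {κ : Type*} [Infinite κ]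
    (B : κ → Set X) (hB : TopologicalSpace.IsTopologicalBasis (Set.range B))
    (f : X → Bool)
    (hF : ∃ F : κ → Set X, (∀ i, IsClosed (F i)) ∧ f ⁻¹' {true} = ⋃ i, F i)
    (hG : ∃ G : κ → Set X, (∀ i, IsOpen (G i)) ∧ f ⁻¹' {true} = ⋂ i, G i) :
    ∃ g : Finset κ → X → Bool, (∀ i, Continuous (g i)) ∧
      (∀ i, IsClopen ((g i) ⁻¹' {true})) ∧
      ∀ x : X, Tendsto (fun i => g i x) atTop (nhds (f x)) := by
  obtain ⟨F, hFc, hFeq⟩ := hF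
  obtain ⟨G, hGo, hGeq⟩ := hG
  have hsub : ∀ s : Finset κ, (⋃ i ∈ s, F i) ⊆ ⋂ i ∈ s, G i := by
    intro s x hx
    have hx' : x ∈ f ⁻¹' {true} := by
      rw [hFeq]
      obtain ⟨i, _, hi⟩ := Set.mem_iUnion₂.1 hx
      exact Set.mem_iUnion.2 ⟨i, hi⟩
    rw [hGeq] at hx'
    exact Set.mem_iInter₂.2 fun i _ => Set.mem_iInter.1 hx' i
  choose K hKclopen hFK hKG using fun s : Finset κ =>
    exists_isClopen_between (isClosed_biUnion_finset fun i _ => hFc i)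
      (isOpen_biInter_finset fun i _ => hGo i) (hsub s)
  refine ⟨fun s => (K s).boolIndicator, ?_, ?_, ?_⟩
  · intro s
    exact (continuous_boolIndicator_iff_isClopen _).2 (hKclopen s)
  · intro s
    rw [Set.preimage_boolIndicator_true]
    exact hKclopen s
  · intro x
    apply tendsto_nhds_of_eventually_eq
    rcases Bool.eq_false_or_eq_true (f x) with hfx | hfx
    · have hx : x ∈ ⋃ i, F i := by
        rw [← hFeq]; simp [hfx]
      obtain ⟨i₀, hi₀⟩ := Set.mem_iUnion.1 hx
      rw [eventually_atTop]
      refine ⟨{i₀}, fun s hs => ?_⟩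
      have : x ∈ K s := hFK s (Set.mem_biUnion (hs (Finset.mem_singleton_self i₀)) hi₀)
      rw [hfx]
      exact ((K s).mem_iff_boolIndicator x).1 this
    · have hx : x ∉ ⋂ i, G i := by
        rw [← hGeq]; simp [hfx]
      obtain ⟨i₀, hi₀⟩ := by simpa [Set.mem_iInter] using hx
      rw [eventually_atTop]
      refine ⟨{i₀}, fun s hs => ?_⟩
      have : x ∉ K s := fun hxK =>
        hi₀ (Set.mem_iInter₂.1 (hKG s hxK) i₀ (hs (Finset.mem_singleton_self i₀)))
      rw [hfx]
      exact ((K s).notMem_iff_boolIndicator x).1 this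
end

section
/- Let X be a compact Hausdorff totally disconnected space with a countable base (equivalently, a Polish zero-dimensional compact space) and f : X → {0,1}. If for every nonempty closed F ⊆ X the restriction f|_F has the property that the set of points of F lying in both the closure of (f|_F)⁻¹(0) and the closure of (f|_F)⁻¹(1) (closures taken in F) has empty interior in F, then f⁻¹(1) is both an F_σ set and a G_δ set. -/
open Filter Topology

/-- `f ∈ B^§(Y)`: the set `closure (f⁻¹(0)) ∩ closure (f⁻¹(1))` has empty interior. -/
def BaireDagger {Y : Type*} [TopologicalSpace Y] (f : Y → Bool) : Prop :=
  interior (closure (f ⁻¹' {false}) ∩ closure (f ⁻¹' {true})) = ∅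

/-- `f ∈ B^§_r(Y)`: the restriction of `f` to every nonempty closed subset `F` (with the subspace
topology) is in `B^§(F)`. -/
def BaireDaggerR {Y : Type*} [TopologicalSpace Y] (f : Y → Bool) : Prop :=
  ∀ F : Set Y, IsClosed F → F.Nonempty → BaireDagger (fun x : F => f x)

section Fsig

variable {X : Type*} [TopologicalSpace X]

/-- Auxiliary: `A` is an `F_σ` set. -/
def Fsig (A : Set X) : Prop :=
  ∃ F : ℕ → Set X, (∀ n, IsClosed (F n)) ∧ A = ⋃ n, F n

lemma IsClosed.fsig {A : Set X} (hA : IsClosed A) : Fsig A :=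
  ⟨fun _ => A, fun _ => hA, (Set.iUnion_const A).symm⟩

lemma fsig_empty : Fsig (∅ : Set X) := isClosed_empty.fsig

lemma Fsig.iUnion {s : ℕ → Set X} (h : ∀ n, Fsig (s n)) : Fsig (⋃ n, s n) := by
  choose F hFcl hFeq using h
  refine ⟨fun k => F ((Denumerable.eqv (ℕ × ℕ)).symm k).1 ((Denumerable.eqv (ℕ × ℕ)).symm k).2,
    fun k => hFcl _ _, ?_⟩
  ext x
  simp only [Set.mem_iUnion]
  constructor
  · rintro ⟨n, hx⟩
    rw [hFeq n] at hx
    obtain ⟨m, hm⟩ := Set.mem_iUnion.mp hx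
    exact ⟨Denumerable.eqv (ℕ × ℕ) (n, m), by simpa using hm⟩
  · rintro ⟨k, hk⟩
    refine ⟨((Denumerable.eqv (ℕ × ℕ)).symm k).1, ?_⟩
    rw [hFeq]
    exact Set.mem_iUnion.mpr ⟨_, hk⟩

lemma Fsig.sUnion {S : Set (Set X)} (hS : S.Countable) (h : ∀ s ∈ S, Fsig s) :
    Fsig (⋃₀ S) := by
  rcases S.eq_empty_or_nonempty with rfl | hne
  · simpa using fsig_empty
  · obtain ⟨g, hg⟩ := hS.exists_eq_range hne
    have : ⋃₀ S = ⋃ n, g n := by rw [hg]; exact Set.sUnion_range g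
    rw [this]
    exact Fsig.iUnion fun n => h _ (by rw [hg]; exact Set.mem_range_self n)

lemma Fsig.union {A B : Set X} (hA : Fsig A) (hB : Fsig B) : Fsig (A ∪ B) := by
  obtain ⟨F, hFcl, rfl⟩ := hA
  obtain ⟨G, hGcl, rfl⟩ := hB
  exact ⟨fun n => F n ∪ G n, fun n => (hFcl n).union (hGcl n),
    (Set.iUnion_union_distrib F G).symm⟩

lemma Fsig.inter {A B : Set X} (hA : Fsig A) (hB : Fsig B) : Fsig (A ∩ B) := by
  obtain ⟨F, hFcl, rfl⟩ := hA
  obtain ⟨G, hGcl, rfl⟩ := hB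
  refine ⟨fun k => F ((Denumerable.eqv (ℕ × ℕ)).symm k).1 ∩ G ((Denumerable.eqv (ℕ × ℕ)).symm k).2,
    fun k => (hFcl _).inter (hGcl _), ?_⟩
  ext x
  simp only [Set.mem_inter_iff, Set.mem_iUnion]
  constructor
  · rintro ⟨⟨n, hn⟩, ⟨m, hm⟩⟩
    exact ⟨Denumerable.eqv (ℕ × ℕ) (n, m), by simpa using ⟨hn, hm⟩⟩
  · rintro ⟨k, hk1, hk2⟩
    exact ⟨⟨_, hk1⟩, ⟨_, hk2⟩⟩

lemma IsGδ.fsig_compl {s : Set X} (hs : IsGδ s) : Fsig sᶜ := by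
  obtain ⟨T, hTopen, hTct, rfl⟩ := hs
  rw [Set.compl_sInter]
  exact Fsig.sUnion (hTct.image _) (by
    rintro t ⟨u, hu, rfl⟩
    exact ((hTopen u hu).isClosed_compl).fsig)

lemma IsOpen.fsig [TopologicalSpace.PseudoMetrizableSpace X] {U : Set X} (hU : IsOpen U) :
    Fsig U := by
  letI : PseudoMetricSpace X := TopologicalSpace.pseudoMetrizableSpacePseudoMetric X
  have : IsGδ Uᶜ := hU.isClosed_compl.isGδ
  simpa using this.fsig_compl

end Fsig

/-- From `BaireDaggerR`, every nonempty closed set has a nonempty relatively open piece on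
which `f` is constant. -/
lemma baireDaggerR_key {X : Type*} [TopologicalSpace X] {f : X → Bool} (hf : BaireDaggerR f)
    {F : Set X} (hFc : IsClosed F) (hFne : F.Nonempty) :
    ∃ V : Set X, IsOpen V ∧ (V ∩ F).Nonempty ∧
      (V ∩ F ⊆ f ⁻¹' {true} ∨ V ∩ F ⊆ (f ⁻¹' {true})ᶜ) := by
  have h := hf F hFc hFne
  unfold BaireDagger at h
  set g : F → Bool := fun x : F => f x with hg
  -- the closed set with empty interior cannot be everything
  have hne : ∃ x : F, x ∉ closure (g ⁻¹' {false}) ∩ closure (g ⁻¹' {true}) := by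
    by_contra hcon
    push_neg at hcon
    have : closure (g ⁻¹' {false}) ∩ closure (g ⁻¹' {true}) = Set.univ :=
      Set.eq_univ_of_forall hcon
    rw [this, interior_univ] at h
    obtain ⟨x, hx⟩ := hFne
    exact (h ▸ Set.mem_univ (⟨x, hx⟩ : F) : (⟨x, hx⟩ : F) ∈ (∅ : Set F))
  obtain ⟨x, hx⟩ := hne
  rw [Set.mem_inter_iff, not_and_or] at hx
  rcases hx with hx | hx
  · -- x not in closure of false-preimage: f = true near x on F
    refine ⟨(closure (Subtype.val '' (g ⁻¹' {false})))ᶜ, isClosed_closure.isOpen_compl,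
      ⟨x, ?_, x.2⟩, Or.inl ?_⟩
    · exact fun hc => hx (closure_subtype.mpr hc)
    · rintro y ⟨hyV, hyF⟩
      simp only [Set.mem_preimage, Set.mem_singleton_iff]
      by_contra hy
      have hyf : f y = false := by
        cases hfy : f y with
        | false => rfl
        | true => exact absurd hfy hy
      have : (⟨y, hyF⟩ : F) ∈ g ⁻¹' {false} := by
        simp [hg, hyf]
      exact hyV (subset_closure ⟨⟨y, hyF⟩, this, rfl⟩)
  · -- x not in closure of true-preimage: f = false near x on F
    refine ⟨(closure (Subtype.val '' (g ⁻¹' {true})))ᶜ, isClosed_closure.isOpen_compl,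
      ⟨x, ?_, x.2⟩, Or.inr ?_⟩
    · exact fun hc => hx (closure_subtype.mpr hc)
    · rintro y ⟨hyV, hyF⟩ hy
      simp only [Set.mem_preimage, Set.mem_singleton_iff] at hy
      have : (⟨y, hyF⟩ : F) ∈ g ⁻¹' {true} := by simp [hg, hy]
      exact hyV (subset_closure ⟨⟨y, hyF⟩, this, rfl⟩)

/-- Auxiliary step for the maximal-open-set argument. -/
lemma fsig_step {X : Type*} [TopologicalSpace X] {V G B : Set X}
    (hVf : Fsig V) (hGc : IsClosed Gᶜ)
    (hsub : V ∩ Gᶜ ⊆ B) (hGB : Fsig (G ∩ B)) (hGBc : Fsig (G ∩ Bᶜ)) :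
    Fsig (V ∩ B) ∧ Fsig (V ∩ Bᶜ) := by
  constructor
  · have hVB : V ∩ B = (V ∩ Gᶜ) ∪ (V ∩ (G ∩ B)) := by
      ext y
      constructor
      · rintro ⟨hyV, hyB⟩
        by_cases hyG : y ∈ G
        · exact Or.inr ⟨hyV, hyG, hyB⟩
        · exact Or.inl ⟨hyV, hyG⟩
      · rintro (⟨hyV, hyGc⟩ | ⟨hyV, _, hyB⟩)
        · exact ⟨hyV, hsub ⟨hyV, hyGc⟩⟩
        · exact ⟨hyV, hyB⟩
    rw [hVB]
    exact (hVf.inter hGc.fsig).union (hVf.inter hGB)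
  · have hVBc : V ∩ Bᶜ = V ∩ (G ∩ Bᶜ) := by
      ext y
      constructor
      · rintro ⟨hyV, hyBc⟩
        by_cases hyG : y ∈ G
        · exact ⟨hyV, hyG, hyBc⟩
        · exact absurd (hsub ⟨hyV, hyG⟩) hyBc
      · rintro ⟨hyV, _, hyBc⟩
        exact ⟨hyV, hyBc⟩
    rw [hVBc]
    exact hVf.inter hGBc

/-- on a compact Hausdorff totally disconnected second countable space,
if `f ∈ B^§_r(X)` then `f ⁻¹' {true}` is both `F_σ` and `G_δ`. -/
theorem stmt2 {X : Type*} [TopologicalSpace X] [CompactSpace X] [T2Space X]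
    [TotallyDisconnectedSpace X] [SecondCountableTopology X]
    (f : X → Bool) (hf : BaireDaggerR f) :
    (∃ F : ℕ → Set X, (∀ n, IsClosed (F n)) ∧ f ⁻¹' {true} = ⋃ n, F n) ∧
      IsGδ (f ⁻¹' {true}) := by
  have _inst : TopologicalSpace.PseudoMetrizableSpace X := inferInstance
  set A : Set X := f ⁻¹' {true} with hA
  set S : Set (Set X) := {U : Set X | IsOpen U ∧ Fsig (U ∩ A) ∧ Fsig (U ∩ Aᶜ)} with hS
  set G : Set X := ⋃₀ S with hGdef
  have hGopen : IsOpen G := isOpen_sUnion fun s hs => hs.1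
  obtain ⟨T, hTct, hTS, hTG⟩ := TopologicalSpace.isOpen_sUnion_countable S fun s hs => hs.1
  have hGA : Fsig (G ∩ A) := by
    have : G ∩ A = ⋃₀ ((fun U => U ∩ A) '' T) := by
      rw [hGdef, ← hTG]
      ext y
      simp only [Set.mem_inter_iff, Set.mem_sUnion, Set.mem_image]
      constructor
      · rintro ⟨⟨u, hu, hyu⟩, hyA⟩
        exact ⟨u ∩ A, ⟨u, hu, rfl⟩, hyu, hyA⟩
      · rintro ⟨t, ⟨u, hu, rfl⟩, hyu, hyA⟩
        exact ⟨⟨u, hu, hyu⟩, hyA⟩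
    rw [this]
    exact Fsig.sUnion (hTct.image _) (by
      rintro t ⟨u, hu, rfl⟩
      exact (hTS hu).2.1)
  have hGAc : Fsig (G ∩ Aᶜ) := by
    have : G ∩ Aᶜ = ⋃₀ ((fun U => U ∩ Aᶜ) '' T) := by
      rw [hGdef, ← hTG]
      ext y
      simp only [Set.mem_inter_iff, Set.mem_sUnion, Set.mem_image]
      constructor
      · rintro ⟨⟨u, hu, hyu⟩, hyA⟩
        exact ⟨u ∩ Aᶜ, ⟨u, hu, rfl⟩, hyu, hyA⟩
      · rintro ⟨t, ⟨u, hu, rfl⟩, hyu, hyA⟩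
        exact ⟨⟨u, hu, hyu⟩, hyA⟩
    rw [this]
    exact Fsig.sUnion (hTct.image _) (by
      rintro t ⟨u, hu, rfl⟩
      exact (hTS hu).2.2)
  -- G is everything
  have hGuniv : G = Set.univ := by
    by_contra hne
    have hFne : Gᶜ.Nonempty := by
      rcases Set.eq_empty_or_nonempty Gᶜ with he | h
      · exact absurd (by simpa [Set.compl_empty_iff] using he) hne
      · exact h
    obtain ⟨V, hVopen, ⟨x, hxV, hxF⟩, hcase⟩ :=
      baireDaggerR_key hf hGopen.isClosed_compl hFne
    have hVS : V ∈ S := by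
      rcases hcase with hsub | hsub
      · obtain ⟨h1, h2⟩ := fsig_step hVopen.fsig hGopen.isClosed_compl hsub hGA hGAc
        exact ⟨hVopen, h1, h2⟩
      · have hGAc' : Fsig (G ∩ Aᶜᶜ) := by rwa [compl_compl]
        obtain ⟨h1, h2⟩ := fsig_step hVopen.fsig hGopen.isClosed_compl hsub hGAc hGAc'
        rw [compl_compl] at h2
        exact ⟨hVopen, h2, h1⟩
    exact hxF (Set.mem_sUnion.mpr ⟨V, hVS, hxV⟩)
  have hAf : Fsig A := by
    have := hGA
    rwa [hGuniv, Set.univ_inter] at this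
  have hAcf : Fsig Aᶜ := by
    have := hGAc
    rwa [hGuniv, Set.univ_inter] at this
  refine ⟨hAf, ?_⟩
  obtain ⟨F, hFcl, hFeq⟩ := hAcf
  have : A = ⋂ n, (F n)ᶜ := by
    rw [← Set.compl_iUnion, ← hFeq, compl_compl]
  rw [this]
  exact IsGδ.iInter fun n => (hFcl n).isOpen_compl.isGδ
end

section
/- Let X be a compact Hausdorff space and f : X → {0,1}. If f⁻¹(1) is both an F_σ and a G_δ subset of X, then for every nonempty closed F ⊆ X, the restriction f|_F has the property that closure_F((f|_F)⁻¹(0)) ∩ closure_F((f|_F)⁻¹(1)) has empty interior in F. -/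
open Filter Topology

/-- on a compact Hausdorff space, if `f ⁻¹' {true}` is both `F_σ` and `G_δ`, then for
every nonempty closed `F ⊆ X`, the restriction `f|_F` satisfies: the intersection of the closures
(in `F`) of `(f|_F)⁻¹(0)` and `(f|_F)⁻¹(1)` has empty interior in `F`. -/
theorem stmt3 {X : Type*} [TopologicalSpace X] [CompactSpace X] [T2Space X]
    (f : X → Bool)
    (hFσ : ∃ F : ℕ → Set X, (∀ n, IsClosed (F n)) ∧ f ⁻¹' {true} = ⋃ n, F n)
    (hGδ : IsGδ (f ⁻¹' {true})) :
    ∀ F : Set X, IsClosed F → F.Nonempty → BaireDagger (fun x : F => f x) := by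
  obtain ⟨C, hCcl, hCeq⟩ := hFσ
  obtain ⟨U, hUop, hUeq⟩ := hGδ.eq_iInter_nat
  -- the false-preimage is an Fσ set as well
  have hfalse : f ⁻¹' {false} = ⋃ n, (U n)ᶜ := by
    have : f ⁻¹' {false} = (f ⁻¹' {true})ᶜ := by
      ext x; cases h : f x <;> simp [h]
    rw [this, hUeq, Set.compl_iInter]
  intro F hF hFne
  haveI : CompactSpace F := isCompact_iff_compactSpace.mp hF.isCompact
  haveI : BaireSpace F := BaireSpace.of_t2Space_locallyCompactSpace
  set g : F → Bool := fun x : F => f x with hg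
  -- closed cover of F
  set D : ℕ ⊕ ℕ → Set F := fun i =>
    Sum.elim (fun n => Subtype.val ⁻¹' C n) (fun n => Subtype.val ⁻¹' (U n)ᶜ) i with hD
  have hDcl : ∀ i, IsClosed (D i) := by
    rintro (n | n)
    · exact (hCcl n).preimage continuous_subtype_val
    · exact ((hUop n).isClosed_compl).preimage continuous_subtype_val
  have hDcov : (⋃ i, D i) = Set.univ := by
    ext x
    simp only [Set.mem_iUnion, Set.mem_univ, iff_true]
    cases h : f (x : X)
    · have : (x : X) ∈ f ⁻¹' {false} := by simp [h]
      rw [hfalse] at this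
      obtain ⟨n, hn⟩ := Set.mem_iUnion.mp this
      exact ⟨Sum.inr n, hn⟩
    · have : (x : X) ∈ f ⁻¹' {true} := by simp [h]
      rw [hCeq] at this
      obtain ⟨n, hn⟩ := Set.mem_iUnion.mp this
      exact ⟨Sum.inl n, hn⟩
  have hdense := dense_iUnion_interior_of_closed hDcl hDcov
  unfold BaireDagger
  by_contra h
  obtain ⟨x, hx⟩ := Set.nonempty_iff_ne_empty.mpr h
  obtain ⟨y, hy', hy⟩ := hdense.inter_open_nonempty _ isOpen_interior ⟨x, hx⟩
  obtain ⟨i, hyi⟩ := Set.mem_iUnion.mp hy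
  have hsub := interior_subset hy'
  -- V is a nonempty open subset
  rcases i with n | n
  · -- y in interior of preimage of C n ⊆ g⁻¹ true, but also in closure of g⁻¹ false
    have hVop : IsOpen (interior (D (Sum.inl n)) ∩
        interior (closure (g ⁻¹' {false}) ∩ closure (g ⁻¹' {true}))) :=
      isOpen_interior.inter isOpen_interior
    have hyV : y ∈ interior (D (Sum.inl n)) ∩
        interior (closure (g ⁻¹' {false}) ∩ closure (g ⁻¹' {true})) := ⟨hyi, hy'⟩
    have hclo : y ∈ closure (g ⁻¹' {false}) := hsub.1
    obtain ⟨z, hzV, hzf⟩ := (mem_closure_iff.mp hclo) _ hVop hyV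
    have hztrue : g z = true := by
      have : z ∈ D (Sum.inl n) := interior_subset hzV.1
      have : (z : X) ∈ f ⁻¹' {true} := by rw [hCeq]; exact Set.mem_iUnion.mpr ⟨n, this⟩
      simpa [hg] using this
    simp [hztrue] at hzf
  · have hVop : IsOpen (interior (D (Sum.inr n)) ∩
        interior (closure (g ⁻¹' {false}) ∩ closure (g ⁻¹' {true}))) :=
      isOpen_interior.inter isOpen_interior
    have hyV : y ∈ interior (D (Sum.inr n)) ∩
        interior (closure (g ⁻¹' {false}) ∩ closure (g ⁻¹' {true})) := ⟨hyi, hy'⟩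
    have hclo : y ∈ closure (g ⁻¹' {true}) := hsub.2
    obtain ⟨z, hzV, hzf⟩ := (mem_closure_iff.mp hclo) _ hVop hyV
    have hzfalse : g z = false := by
      have : z ∈ D (Sum.inr n) := interior_subset hzV.1
      have : (z : X) ∈ f ⁻¹' {false} := by
        rw [hfalse]; exact Set.mem_iUnion.mpr ⟨n, this⟩
      simpa [hg] using this
    simp [hzfalse] at hzf
end

section
/- Let X be a compact Hausdorff totally disconnected space with a base of size at most κ, and f : X → {0,1}. Suppose that for every nonempty closed F ⊆ X, the set closure_F((f|_F)⁻¹(0)) ∩ closure_F((f|_F)⁻¹(1)) has empty interior in F. Then f⁻¹(1) can be written as a union of at most κ closed subsets of X. -/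
open Filter Topology

universe u

/-- The "derivative" of a set `F`: points in the closure of both the `false` part
and the `true` part of `F`. -/
def Dv {X : Type u} [TopologicalSpace X] (f : X → Bool) (F : Set X) : Set X :=
  closure (F ∩ f ⁻¹' {false}) ∩ closure (F ∩ f ⁻¹' {true})

lemma Dv_isClosed {X : Type u} [TopologicalSpace X] (f : X → Bool) (F : Set X) :
    IsClosed (Dv f F) := isClosed_closure.inter isClosed_closure

lemma Dv_subset {X : Type u} [TopologicalSpace X] (f : X → Bool) {F : Set X}
    (hF : IsClosed F) : Dv f F ⊆ F := fun x hx => by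
  have : closure (F ∩ f ⁻¹' {false}) ⊆ F :=
    closure_minimal Set.inter_subset_left hF
  exact this hx.1

/-- Iterated derivative, by transfinite recursion. -/
noncomputable def Gv {X : Type u} [TopologicalSpace X] (f : X → Bool) (o : Ordinal.{u}) : Set X :=
  ⋂ (o' : Set.Iio o), Dv f (Gv f o'.1)
termination_by o
decreasing_by exact o'.2

lemma Gv_eq {X : Type u} [TopologicalSpace X] (f : X → Bool) (o : Ordinal.{u}) :
    Gv f o = ⋂ (o' : Set.Iio o), Dv f (Gv f o'.1) := by rw [Gv]

lemma Gv_isClosed {X : Type u} [TopologicalSpace X] (f : X → Bool) (o : Ordinal.{u}) :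
    IsClosed (Gv f o) := by
  rw [Gv_eq]; exact isClosed_iInter fun _ => Dv_isClosed f _

lemma Gv_subset_Dv {X : Type u} [TopologicalSpace X] (f : X → Bool) {o' o : Ordinal.{u}}
    (h : o' < o) : Gv f o ⊆ Dv f (Gv f o') := by
  rw [Gv_eq]; exact Set.iInter_subset (fun o'' : Set.Iio o => Dv f (Gv f o''.1)) ⟨o', h⟩

lemma Gv_antitone {X : Type u} [TopologicalSpace X] (f : X → Bool) :
    Antitone (Gv f) := by
  intro o1 o2 h
  rcases eq_or_lt_of_le h with rfl | h
  · exact le_refl _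
  · exact (Gv_subset_Dv f h).trans (Dv_subset f (Gv_isClosed f o1))

/-- Escape lemma: a point outside some `Gv f o` escapes at some precise stage. -/
lemma Gv_escape {X : Type u} [TopologicalSpace X] (f : X → Bool) {x : X} {o : Ordinal.{u}}
    (h : x ∉ Gv f o) : ∃ o', x ∈ Gv f o' ∧ x ∉ Dv f (Gv f o') := by
  classical
  set S : Set Ordinal.{u} := {o | x ∉ Gv f o} with hS
  have hSne : S.Nonempty := ⟨o, h⟩
  set o₀ := wellFounded_lt.min S hSne with ho₀
  have hmem : x ∉ Gv f o₀ := wellFounded_lt.min_mem S hSne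
  rw [Gv_eq] at hmem
  simp only [Set.mem_iInter, not_forall] at hmem
  obtain ⟨⟨o', ho'⟩, hd⟩ := hmem
  refine ⟨o', ?_, hd⟩
  by_contra hxg
  exact wellFounded_lt.not_lt_min S (hxg : o' ∈ S) ho'

/-- If every nonempty closed set has a proper derivative, some iterate is empty. -/
lemma Gv_vanish {X : Type u} [TopologicalSpace X] (f : X → Bool)
    (hD : ∀ F : Set X, IsClosed F → F.Nonempty → Dv f F ≠ F) :
    ∃ o : Ordinal.{u}, Gv f o = ∅ := by
  by_contra h
  push_neg at h
  have hne : ∀ o, (Gv f o).Nonempty := h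
  have key : ∀ o1 o2 : Ordinal.{u}, o1 < o2 → Gv f o1 ≠ Gv f o2 := by
    intro o1 o2 hlt heq
    have h1 : Gv f o2 ⊆ Dv f (Gv f o1) := Gv_subset_Dv f hlt
    have h2 : Dv f (Gv f o1) ⊆ Gv f o1 := Dv_subset f (Gv_isClosed f o1)
    have : Dv f (Gv f o1) = Gv f o1 :=
      subset_antisymm h2 (by rw [heq] at h1 ⊢; exact heq ▸ h1)
    exact hD (Gv f o1) (Gv_isClosed f o1) (hne o1) this
  have : Function.Injective (Gv f) := by
    intro o1 o2 heq
    rcases lt_trichotomy o1 o2 with hlt | rfl | hlt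
    · exact absurd heq (key o1 o2 hlt)
    · rfl
    · exact absurd heq.symm (key o2 o1 hlt)
  exact not_injective_of_ordinal (Gv f) this

/-- Translation of the `BaireDagger` hypothesis: the derivative of a nonempty closed set
is a proper subset. -/
lemma Dv_ne {X : Type u} [TopologicalSpace X] (f : X → Bool)
    (hf : ∀ F : Set X, IsClosed F → F.Nonempty → BaireDagger (fun x : F => f x))
    (F : Set X) (hcl : IsClosed F) (hne : F.Nonempty) : Dv f F ≠ F := by
  intro hDF
  have hbd := hf F hcl hne
  unfold BaireDagger at hbd
  have e0 : ((fun x : F => f x) ⁻¹' {false} : Set F)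
      = (Subtype.val : F → X) ⁻¹' (f ⁻¹' {false}) := rfl
  have e1 : ((fun x : F => f x) ⁻¹' {true} : Set F)
      = (Subtype.val : F → X) ⁻¹' (f ⁻¹' {true}) := rfl
  have hclsub : ∀ s : Set X,
      closure ((Subtype.val : F → X) ⁻¹' s)
        = (Subtype.val : F → X) ⁻¹' closure (F ∩ s) := by
    intro s
    rw [Topology.IsEmbedding.subtypeVal.closure_eq_preimage_closure_image]
    rw [Subtype.image_preimage_coe]
  rw [e0, e1, hclsub, hclsub, ← Set.preimage_inter] at hbd
  have : closure (F ∩ f ⁻¹' {false}) ∩ closure (F ∩ f ⁻¹' {true}) = F := by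
    rw [show closure (F ∩ f ⁻¹' {false}) ∩ closure (F ∩ f ⁻¹' {true}) = Dv f F from rfl, hDF]
  rw [this] at hbd
  have huniv : (Subtype.val : F → X) ⁻¹' F = Set.univ := by
    ext x; simp [x.2]
  rw [huniv, interior_univ] at hbd
  obtain ⟨x, hx⟩ := hne
  exact absurd hbd (by simp [Set.eq_empty_iff_forall_notMem]; exact ⟨x, hx⟩)

/-- `X` compact Hausdorff totally disconnected with a base of size at most `κ`.
If for every nonempty closed `F ⊆ X` the restriction `f|_F` is in `B^§(F)`, then `f ⁻¹' {true}`
is a union of at most `κ` closed sets. -/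
theorem stmt4 {X : Type*} [TopologicalSpace X] [CompactSpace X] [T2Space X]
    [TotallyDisconnectedSpace X] {κ : Type*} [Infinite κ]
    (B : κ → Set X) (hB : TopologicalSpace.IsTopologicalBasis (Set.range B))
    (f : X → Bool)
    (hf : ∀ F : Set X, IsClosed F → F.Nonempty → BaireDagger (fun x : F => f x)) :
    ∃ F : κ → Set X, (∀ i, IsClosed (F i)) ∧ f ⁻¹' {true} = ⋃ i, F i := by
  classical
  have hD : ∀ F : Set X, IsClosed F → F.Nonempty → Dv f F ≠ F := Dv_ne f hf
  obtain ⟨oE, hoE⟩ := Gv_vanish f hD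
  set S : κ → Set Ordinal := fun i => {o | closure (B i) ∩ Gv f o ⊆ f ⁻¹' {true}} with hSdef
  have hSne : ∀ i, (S i).Nonempty := fun i => ⟨oE, by simp [hSdef, hoE]⟩
  set β : κ → Ordinal := fun i => wellFounded_lt.min (S i) (hSne i) with hβ
  refine ⟨fun i => closure (B i) ∩ Gv f (β i), fun i =>
    isClosed_closure.inter (Gv_isClosed f (β i)), ?_⟩
  apply subset_antisymm
  · -- every true point is captured
    intro x hx
    have hxt : f x = true := hx
    have hxo : x ∉ Gv f oE := by rw [hoE]; exact Set.notMem_empty x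
    obtain ⟨o', hxg, hxd⟩ := Gv_escape f hxo
    have hxcl : x ∉ closure (Gv f o' ∩ f ⁻¹' {false}) := by
      intro hc
      exact hxd ⟨hc, subset_closure ⟨hxg, by simp [hxt]⟩⟩
    have hU : IsOpen (closure (Gv f o' ∩ f ⁻¹' {false}))ᶜ := isClosed_closure.isOpen_compl
    obtain ⟨C, hC, hxC, hCU⟩ := compact_exists_isClopen_in_isOpen hU hxcl
    obtain ⟨v, ⟨i, rfl⟩, hxB, hBC⟩ := hB.exists_subset_of_mem_open hxC hC.2
    have hclBC : closure (B i) ⊆ C := closure_minimal hBC hC.1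
    have hkey : o' ∈ S i := by
      rintro y ⟨hyc, hyg⟩
      have hyU : y ∉ closure (Gv f o' ∩ f ⁻¹' {false}) := hCU (hclBC hyc)
      cases hfy : f y with
      | false => exact absurd (subset_closure (s := Gv f o' ∩ f ⁻¹' {false}) ⟨hyg, by simp [hfy]⟩) hyU
      | true => simp [hfy]
    have hle : β i ≤ o' := not_lt.mp (wellFounded_lt.not_lt_min (S i) hkey)
    exact Set.mem_iUnion.2 ⟨i, subset_closure hxB, Gv_antitone f hle hxg⟩
  · -- each piece consists of true points
    intro x hx
    obtain ⟨i, hxc, hxg⟩ := Set.mem_iUnion.1 hx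
    exact wellFounded_lt.min_mem (S i) (hSne i) ⟨hxc, hxg⟩
end

section
/- Let π : L → K be a continuous surjection between compact Hausdorff spaces and f : K → {0,1} a function. If the composition f ∘ π belongs to B^§_r(L), then f belongs to B^§_r(K). -/
open Filter Topology

/-- if `π : L → K` is a continuous surjection between compact Hausdorff spaces and
`f ∘ π ∈ B^§_r(L)`, then `f ∈ B^§_r(K)`. -/
theorem stmt5 {L K : Type*} [TopologicalSpace L] [CompactSpace L] [T2Space L]
    [TopologicalSpace K] [CompactSpace K] [T2Space K]
    (π : L → K) (hπc : Continuous π) (hπs : Function.Surjective π)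
    (f : K → Bool) (hfp : BaireDaggerR (f ∘ π)) :
    BaireDaggerR f := by
  intro F hFc hFne
  rw [BaireDagger, Set.eq_empty_iff_forall_notMem]
  intro x hx
  -- extract an open set `W` of `K` with `x ∈ W ∩ F ⊆` the closures intersection
  obtain ⟨U, hUsub, hUo, hxU⟩ := mem_interior.mp hx
  obtain ⟨W, hWo, hWeq⟩ := isOpen_induced_iff.mp hUo
  -- sets in K
  set A0 : Set K := {y | y ∈ F ∧ f y = false} with hA0
  set A1 : Set K := {y | y ∈ F ∧ f y = true} with hA1
  have hval : Topology.IsEmbedding (Subtype.val : F → K) := Topology.IsEmbedding.subtypeVal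
  have himg0 : (Subtype.val : F → K) '' ((fun x : F => f x) ⁻¹' {false}) = A0 := by
    ext y; constructor
    · rintro ⟨z, hz, rfl⟩; exact ⟨z.2, by simpa using hz⟩
    · rintro ⟨hyF, hyf⟩; exact ⟨⟨y, hyF⟩, by simpa using hyf, rfl⟩
  have himg1 : (Subtype.val : F → K) '' ((fun x : F => f x) ⁻¹' {true}) = A1 := by
    ext y; constructor
    · rintro ⟨z, hz, rfl⟩; exact ⟨z.2, by simpa using hz⟩
    · rintro ⟨hyF, hyf⟩; exact ⟨⟨y, hyF⟩, by simpa using hyf, rfl⟩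
  have hUcl : ∀ y : K, y ∈ W ∩ F → y ∈ closure A0 ∩ closure A1 := by
    rintro y ⟨hyW, hyF⟩
    have hy : (⟨y, hyF⟩ : F) ∈ U := by rw [← hWeq]; exact hyW
    have := hUsub hy
    rw [hval.closure_eq_preimage_closure_image, hval.closure_eq_preimage_closure_image,
      himg0, himg1] at this
    exact this
  -- Zorn: minimal closed `G ⊆ π⁻¹ F` with `π '' G = F`
  set S : Set (Set L) := {G | G ⊆ π ⁻¹' F ∧ IsClosed G ∧ π '' G = F} with hS
  have hpre : π ⁻¹' F ∈ S :=
    ⟨subset_rfl, hFc.preimage hπc, Set.image_preimage_eq F hπs⟩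
  have hzorn : ∀ c ⊆ S, IsChain (· ⊆ ·) c → c.Nonempty →
      ∃ lb ∈ S, ∀ s ∈ c, lb ⊆ s := by
    intro c hcS hchain hcne
    refine ⟨⋂₀ c, ⟨?_, ?_, ?_⟩, fun s hs => Set.sInter_subset_of_mem hs⟩
    · obtain ⟨s, hs⟩ := hcne
      exact (Set.sInter_subset_of_mem hs).trans (hcS hs).1
    · exact isClosed_sInter fun s hs => (hcS hs).2.1
    · apply Set.Subset.antisymm
      · obtain ⟨s, hs⟩ := hcne
        rw [← (hcS hs).2.2]
        exact Set.image_mono (Set.sInter_subset_of_mem hs)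
      · intro y hyF
        have : Nonempty c := hcne.to_subtype
        have hne : (⋂ s : c, (s : Set L) ∩ π ⁻¹' {y}).Nonempty := by
          apply IsCompact.nonempty_iInter_of_directed_nonempty_isCompact_isClosed
          · rintro ⟨s, hs⟩ ⟨t, ht⟩
            rcases hchain.total hs ht with h | h
            · exact ⟨⟨s, hs⟩, subset_rfl,
                Set.inter_subset_inter_left _ h⟩
            · exact ⟨⟨t, ht⟩, Set.inter_subset_inter_left _ h, subset_rfl⟩
          · rintro ⟨s, hs⟩
            have : y ∈ π '' s := by rw [(hcS hs).2.2]; exact hyF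
            obtain ⟨z, hz, hzy⟩ := this
            exact ⟨z, hz, hzy⟩
          · rintro ⟨s, hs⟩
            exact (((hcS hs).2.1.isCompact)).inter_right
              (isClosed_singleton.preimage hπc)
          · rintro ⟨s, hs⟩
            exact ((hcS hs).2.1).inter (isClosed_singleton.preimage hπc)
        obtain ⟨z, hz⟩ := hne
        refine ⟨z, ?_, ?_⟩
        · rw [Set.mem_sInter]
          intro s hs
          exact (Set.mem_iInter.mp hz ⟨s, hs⟩).1
        · exact (Set.mem_iInter.mp hz (Classical.arbitrary _)).2
  obtain ⟨G, -, hGS, hGmin⟩ : ∃ G, G ⊆ π ⁻¹' F ∧ G ∈ S ∧ ∀ G' ∈ S, G' ⊆ G → G' = G := by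
    obtain ⟨G, hG1, hG2⟩ := zorn_superset_nonempty S hzorn _ hpre
    exact ⟨G, hG1, hG2.prop, fun G' hG' hsub => hG2.eq_of_le hG' hsub⟩
  obtain ⟨hGpre, hGcl, hGimg⟩ := hGS
  -- sets in L
  set B0 : Set L := {z | z ∈ G ∧ f (π z) = false} with hB0
  set B1 : Set L := {z | z ∈ G ∧ f (π z) = true} with hB1
  -- key density claim
  have key : ∀ z ∈ π ⁻¹' W ∩ G, z ∈ closure B0 ∩ closure B1 := by
    intro z ⟨hzW, hzG⟩
    have main : ∀ (b : Bool) (A : Set K) (B : Set L), A = {y | y ∈ F ∧ f y = b} →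
        B = {w | w ∈ G ∧ f (π w) = b} → z ∈ closure B := by
      intro b A B hA hB
      rw [mem_closure_iff]
      intro V hVo hzV
      set V' := V ∩ π ⁻¹' W with hV'
      have hV'o : IsOpen V' := hVo.inter (hWo.preimage hπc)
      have hzV' : z ∈ V' := ⟨hzV, hzW⟩
      set C : Set K := π '' (G \ V') with hC
      have hCcl : IsClosed C :=
        ((hGcl.isCompact.diff hV'o).image hπc).isClosed
      -- F \ C is nonempty
      have hFC : ∃ y, y ∈ F ∧ y ∉ C := by
        by_contra h
        push_neg at h
        have hmem : G \ V' ∈ S := by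
          refine ⟨fun w hw => hGpre hw.1, hGcl.sdiff hV'o, ?_⟩
          apply Set.Subset.antisymm
          · intro y hy
            obtain ⟨w, hw, rfl⟩ := hy
            exact hGpre hw.1
          · intro y hyF
            exact h y hyF
        have := hGmin _ hmem Set.diff_subset
        rw [← this] at hzG
        exact hzG.2 hzV'
      obtain ⟨y, hyF, hyC⟩ := hFC
      -- y ∈ W
      obtain ⟨z', hz'G, hz'y⟩ : ∃ z' ∈ G, π z' = y := by
        have : y ∈ π '' G := hGimg ▸ hyF
        exact this
      have hz'V' : z' ∈ V' := by
        by_contra h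
        exact hyC ⟨z', ⟨hz'G, h⟩, hz'y⟩
      have hyW : y ∈ W := by rw [← hz'y]; exact hz'V'.2
      -- y ∈ closure A
      have hyA : y ∈ closure A := by
        have := hUcl y ⟨hyW, hyF⟩
        cases b
        · rw [hA]; exact this.1
        · rw [hA]; exact this.2
      -- Cᶜ is an open neighbourhood of y, so meets A
      obtain ⟨a, haC, haA⟩ : (Cᶜ ∩ A).Nonempty := by
        rw [mem_closure_iff] at hyA
        exact hyA Cᶜ hCcl.isOpen_compl hyC
      obtain ⟨w, hwG, hwa⟩ : ∃ w ∈ G, π w = a := by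
        have : a ∈ π '' G := by rw [hGimg]; exact (hA ▸ haA).1
        exact this
      have hwV' : w ∈ V' := by
        by_contra h
        exact haC ⟨w, ⟨hwG, h⟩, hwa⟩
      refine ⟨w, hwV'.1, ?_⟩
      rw [hB]
      exact ⟨hwG, by rw [hwa]; exact (hA ▸ haA).2⟩
    exact ⟨main false A0 B0 rfl rfl, main true A1 B1 rfl rfl⟩
  -- now contradict hfp on G
  have hGne : G.Nonempty := by
    obtain ⟨y, hy⟩ := hFne
    have : y ∈ π '' G := by rw [hGimg]; exact hy
    obtain ⟨z, hz, -⟩ := this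
    exact ⟨z, hz⟩
  have hbd := hfp G hGcl hGne
  rw [BaireDagger, Set.eq_empty_iff_forall_notMem] at hbd
  -- the open set in the subtype
  have hvalG : Topology.IsEmbedding (Subtype.val : G → L) := Topology.IsEmbedding.subtypeVal
  set O : Set G := (Subtype.val : G → L) ⁻¹' (π ⁻¹' W) with hO
  have hOo : IsOpen O := (hWo.preimage hπc).preimage hvalG.continuous
  have hOne : O.Nonempty := by
    have hxF : (x : K) ∈ F := x.2
    have hxG : (x : K) ∈ π '' G := by rw [hGimg]; exact hxF
    obtain ⟨z, hzG, hzx⟩ := hxG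
    refine ⟨⟨z, hzG⟩, ?_⟩
    simp only [hO, Set.mem_preimage]
    rw [hzx]
    have : (⟨(x : K), x.2⟩ : F) ∈ U := by
      rw [← hWeq] at hxU ⊢
      exact hxU
    rw [← hWeq] at this
    exact this
  have himgB0 : (Subtype.val : G → L) '' ((fun x : G => (f ∘ π) x) ⁻¹' {false}) = B0 := by
    ext w; constructor
    · rintro ⟨u, hu, rfl⟩; exact ⟨u.2, by simpa using hu⟩
    · rintro ⟨hwG, hwf⟩; exact ⟨⟨w, hwG⟩, by simpa using hwf, rfl⟩
  have himgB1 : (Subtype.val : G → L) '' ((fun x : G => (f ∘ π) x) ⁻¹' {true}) = B1 := by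
    ext w; constructor
    · rintro ⟨u, hu, rfl⟩; exact ⟨u.2, by simpa using hu⟩
    · rintro ⟨hwG, hwf⟩; exact ⟨⟨w, hwG⟩, by simpa using hwf, rfl⟩
  have hOsub : O ⊆ closure ((fun x : G => (f ∘ π) x) ⁻¹' {false}) ∩
      closure ((fun x : G => (f ∘ π) x) ⁻¹' {true}) := by
    intro u hu
    have := key (u : L) ⟨hu, u.2⟩
    rw [hvalG.closure_eq_preimage_closure_image, hvalG.closure_eq_preimage_closure_image,
      himgB0, himgB1]
    exact this
  obtain ⟨u, hu⟩ := hOne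
  exact hbd u (mem_interior.mpr ⟨O, hOsub, hOo, hu⟩)
end

section
/- Let X be a compact Hausdorff space in which every point is in the closure of both f⁻¹(0) and f⁻¹(1) for some f : X → {0,1} (i.e., closure(f⁻¹(0)) = closure(f⁻¹(1)) = X). Then f does not belong to B^§(X). Conversely, if f ∉ B^§(X), then there exists a nonempty closed subspace X' ⊆ X such that closure_{X'}((f|_{X'})⁻¹(0)) = closure_{X'}((f|_{X'})⁻¹(1)) = X'. -/
open Filter Topology

/-- Auxiliary: if an open set `U` is contained in `closure s`, then `U ⊆ closure (s ∩ U)`. -/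
lemma open_subset_closure_inter {X : Type*} [TopologicalSpace X] {U s : Set X}
    (hU : IsOpen U) (h : U ⊆ closure s) : U ⊆ closure (s ∩ U) := by
  intro x hx
  have hs := h hx
  rw [mem_closure_iff] at hs ⊢
  intro V hV hxV
  obtain ⟨y, hy, hys⟩ := hs (V ∩ U) (hV.inter hU) ⟨hxV, hx⟩
  exact ⟨y, hy.1, hys, hy.2⟩

lemma dense_restrict {X : Type*} [TopologicalSpace X] (f : X → Bool) (b : Bool)
    (U : Set X) (hU : IsOpen U) (h : U ⊆ closure (f ⁻¹' {b})) :
    closure ((fun x : closure U => f x) ⁻¹' {b}) = Set.univ := by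
  ext x
  simp only [Set.mem_univ, iff_true]
  rw [show ((fun x : closure U => f x) ⁻¹' {b}) = Subtype.val ⁻¹' (f ⁻¹' {b}) from rfl,
    closure_subtype]
  have h1 : U ⊆ closure (f ⁻¹' {b} ∩ U) := open_subset_closure_inter hU h
  have h2 : (x : X) ∈ closure (f ⁻¹' {b} ∩ U) := by
    have := closure_mono h1 x.2
    rwa [closure_closure] at this
  refine closure_mono ?_ h2
  intro y hy
  exact ⟨⟨y, subset_closure hy.2⟩, hy.1, rfl⟩

/-- on a nonempty compact Hausdorff space `X`:
(a) if `closure (f⁻¹(0)) = closure (f⁻¹(1)) = X` then `f ∉ B^§(X)`; and conversely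
(b) if `f ∉ B^§(X)` then there is a nonempty closed subspace `X' ⊆ X` on which the restriction of
`f` has both `closure ((f|_{X'})⁻¹(0)) = X'` and `closure ((f|_{X'})⁻¹(1)) = X'`
(closures in the subspace topology). -/
theorem stmt8 {X : Type*} [TopologicalSpace X] [CompactSpace X] [T2Space X] [Nonempty X]
    (f : X → Bool) :
    ((closure (f ⁻¹' {false}) = Set.univ ∧ closure (f ⁻¹' {true}) = Set.univ) →
      ¬ BaireDagger f) ∧
    (¬ BaireDagger f →
      ∃ X' : Set X, IsClosed X' ∧ X'.Nonempty ∧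
        closure ((fun x : X' => f x) ⁻¹' {false}) = Set.univ ∧
        closure ((fun x : X' => f x) ⁻¹' {true}) = Set.univ) := by
  constructor
  · rintro ⟨h0, h1⟩ hB
    unfold BaireDagger at hB
    rw [h0, h1, Set.univ_inter, interior_univ] at hB
    exact (Set.univ_nonempty).ne_empty hB
  · intro hB
    unfold BaireDagger at hB
    set U := interior (closure (f ⁻¹' {false}) ∩ closure (f ⁻¹' {true})) with hUdef
    have hUne : U.Nonempty := Set.nonempty_iff_ne_empty.2 hB
    have hUopen : IsOpen U := isOpen_interior
    refine ⟨closure U, isClosed_closure, hUne.closure, ?_, ?_⟩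
    · exact dense_restrict f false U hUopen
        (interior_subset.trans Set.inter_subset_left)
    · exact dense_restrict f true U hUopen
        (interior_subset.trans Set.inter_subset_right)
end
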